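/- Let ξ = (ξ_i) be conditionally i.i.d. given 𝒢 (S-valued), Y a T-valued random variable measurable with respect to 𝒢, and f: T × S → ℝ measurable. Then the sequence ξ'_i = f(Y, ξ_i) is conditionally i.i.d. given 𝒢: P(⋂_{i=1}^n {ξ'_i ∈ B_i} | 𝒢) = ∏_{i=1}^n ∫_S 1_{B_i}(f(Y,x)) ν(dx) a.s. for all Borel B₁,...,B_n ⊆ ℝ, where ν is the directing random measure of ξ. -/

import Mathlib

open MeasureTheory ProbabilityTheory TopologicalSpace Filter Topology

noncomputable section

/-- `π` is the infinite product (i.i.d.) measure on `ℕ → X` with all factors `ν`. -/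
def IsIIDProduct {X : Type*} [MeasurableSpace X] (ν : Measure X) (π : Measure (ℕ → X)) : Prop :=
  IsProbabilityMeasure π ∧
    ∀ (n : ℕ) (A : Fin n → Set X), (∀ i, MeasurableSet (A i)) →
      π {x | ∀ i : Fin n, x (i : ℕ) ∈ A i} = ∏ i : Fin n, ν (A i)

/-- Auxiliary version of the main theorem, stated so that the ambient σ-algebra `mΩ` is the
most recent local instance (hence the default one inside the proof). -/
theorem stmt11_aux {Ω S T : Type*} (G : MeasurableSpace Ω) [mΩ : MeasurableSpace Ω]
    [MetricSpace S] [CompleteSpace S] [SeparableSpace S] [MeasurableSpace S] [BorelSpace S]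
    [MeasurableSpace T]
    (hle : G ≤ mΩ)
    (P : Measure Ω) [IsProbabilityMeasure P]
    (ξ : ℕ → Ω → S) (hξ : ∀ i, Measurable (ξ i))
    (ν : Ω → Measure S) (hνm : Measurable[G] ν) (hνp : ∀ ω, IsProbabilityMeasure (ν ω))
    (νInf : Ω → Measure (ℕ → S)) (hνInf : ∀ ω, IsIIDProduct (ν ω) (νInf ω))
    (hcond : ∀ A : Set (ℕ → S), MeasurableSet A →
      P[(A.indicator fun _ => (1:ℝ)) ∘ (fun ω (i : ℕ) => ξ i ω) | G]
        =ᵐ[P] fun ω => (νInf ω A).toReal)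
    (Y : Ω → T) (hY : Measurable[G] Y)
    (f : T × S → ℝ) (hf : Measurable f) :
    ∀ (n : ℕ) (B : Fin n → Set ℝ), (∀ i, MeasurableSet (B i)) →
      P[Set.indicator {ω | ∀ i : Fin n, f (Y ω, ξ (i : ℕ) ω) ∈ B i} (fun _ => (1:ℝ)) | G]
        =ᵐ[P] fun ω => ∏ i : Fin n, ((ν ω) {x | f (Y ω, x) ∈ B i}).toReal := by
  have hνInfP : ∀ ω, IsProbabilityMeasure (νInf ω) := fun ω => (hνInf ω).1
  set ξv : Ω → ℕ → S := fun ω i => ξ i ω with hξv_def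
  have hξvm : Measurable ξv := measurable_pi_lambda _ fun i => hξ i
  -- the π-system of boxes on `ℕ → S`
  set 𝒞 : Set (Set (ℕ → S)) := {C | ∃ A : ℕ → Set S, ∃ n : ℕ,
    (∀ i, MeasurableSet (A i)) ∧ (∀ i, n ≤ i → A i = Set.univ) ∧
      C = {x | ∀ i, x i ∈ A i}} with h𝒞_def
  have hCbox : ∀ (A : ℕ → Set S) (n : ℕ), (∀ i, n ≤ i → A i = Set.univ) →
      {x : ℕ → S | ∀ i, x i ∈ A i} = {x : ℕ → S | ∀ i : Fin n, x (i : ℕ) ∈ A (i : ℕ)} := by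
    intro A n hAu
    ext x
    constructor
    · intro hx i; exact hx i
    · intro hx i
      by_cases hi : i < n
      · exact hx ⟨i, hi⟩
      · rw [hAu i (not_lt.1 hi)]; trivial
  have hCmeas : ∀ C ∈ 𝒞, MeasurableSet C := by
    rintro _ ⟨A, n, hA, -, rfl⟩
    have : {x : ℕ → S | ∀ i, x i ∈ A i} = ⋂ i, (fun x : ℕ → S => x i) ⁻¹' A i := by
      ext x; simp
    rw [this]
    exact MeasurableSet.iInter fun i => (measurable_pi_apply i) (hA i)
  have hνInfC : ∀ (ω : Ω) (A : ℕ → Set S) (n : ℕ), (∀ i, MeasurableSet (A i)) →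
      (∀ i, n ≤ i → A i = Set.univ) →
      νInf ω {x | ∀ i, x i ∈ A i} = ∏ i : Fin n, ν ω (A (i : ℕ)) := by
    intro ω A n hA hAu
    rw [hCbox A n hAu]
    exact (hνInf ω).2 n (fun i => A (i : ℕ)) (fun i => hA _)
  have hgen : (MeasurableSpace.pi : MeasurableSpace (ℕ → S)) = .generateFrom 𝒞 := by
    refine le_antisymm (iSup_le fun i => ?_) (MeasurableSpace.generateFrom_le hCmeas)
    rintro s ⟨t, ht, rfl⟩
    apply MeasurableSpace.measurableSet_generateFrom
    refine ⟨fun j => if j = i then t else Set.univ, i + 1, ?_, ?_, ?_⟩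
    · intro j; by_cases h : j = i <;> simp [h, ht]
    · intro j hj
      have : j ≠ i := by omega
      simp [this]
    · ext x
      constructor
      · intro hx j
        by_cases h : j = i
        · subst h; simpa using hx
        · simp [h]
      · intro hx
        have := hx i
        simpa using this
  have hCpi : IsPiSystem 𝒞 := by
    rintro _ ⟨A₁, n₁, hA₁, hA₁u, rfl⟩ _ ⟨A₂, n₂, hA₂, hA₂u, rfl⟩ -
    refine ⟨fun i => A₁ i ∩ A₂ i, max n₁ n₂, fun i => (hA₁ i).inter (hA₂ i), ?_, ?_⟩
    · intro i hi
      simp [hA₁u i (le_trans (le_max_left _ _) hi), hA₂u i (le_trans (le_max_right _ _) hi)]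
    · ext x; simp [forall_and]
  have h𝒞span : IsCountablySpanning 𝒞 :=
    ⟨fun _ => Set.univ,
      fun _ => ⟨fun _ => Set.univ, 0, fun _ => MeasurableSet.univ, fun _ _ => rfl,
        by ext x; simp⟩,
      Set.iUnion_const _⟩
  -- generator of the product σ-algebra on `T × (ℕ → S)`
  set ℛ : Set (Set (T × (ℕ → S))) :=
    Set.image2 (fun s t => s ×ˢ t) {D : Set T | MeasurableSet D} 𝒞 with hℛ_def
  have hℛpi : IsPiSystem ℛ := MeasurableSpace.isPiSystem_measurableSet.prod hCpi
  have hgenProd : (Prod.instMeasurableSpace : MeasurableSpace (T × (ℕ → S))) = .generateFrom ℛ :=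
    (generateFrom_eq_prod MeasurableSpace.generateFrom_measurableSet hgen.symm
      isCountablySpanning_measurableSet h𝒞span).symm
  have hν_apply : ∀ {s : Set S}, MeasurableSet s → Measurable[G] fun ω => ν ω s :=
    fun hs => (Measure.measurable_coe hs).comp hνm
  -- measurability (w.r.t. G) of sections
  have hmeas_sect : ∀ ⦃C : Set (T × (ℕ → S))⦄, MeasurableSet C →
      Measurable[G] fun ω => νInf ω (Prod.mk (Y ω) ⁻¹' C) := by
    refine MeasurableSpace.induction_on_inter hgenProd hℛpi ?_ ?_ ?_ ?_
    · simpa using (measurable_const : Measurable[G] fun _ : Ω => (0 : ENNReal))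
    · rintro _ ⟨D, hD, C', hC'mem, rfl⟩
      obtain ⟨A, n, hA, hAu, rfl⟩ := hC'mem
      have hfun : (fun ω => νInf ω (Prod.mk (Y ω) ⁻¹' (D ×ˢ {x | ∀ i, x i ∈ A i}))) =
          (Y ⁻¹' D).indicator (fun ω => ∏ i : Fin n, ν ω (A (i : ℕ))) := by
        funext ω
        by_cases hω : Y ω ∈ D
        · rw [Set.indicator_of_mem (show ω ∈ Y ⁻¹' D from hω)]
          have hpre : Prod.mk (Y ω) ⁻¹' (D ×ˢ {x : ℕ → S | ∀ i, x i ∈ A i}) =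
              {x : ℕ → S | ∀ i, x i ∈ A i} := by
            ext s; simp [hω]
          rw [hpre, hνInfC ω A n hA hAu]
        · rw [Set.indicator_of_notMem (show ω ∉ Y ⁻¹' D from hω)]
          have hpre : Prod.mk (Y ω) ⁻¹' (D ×ˢ {x : ℕ → S | ∀ i, x i ∈ A i}) = ∅ := by
            ext s; simp [hω]
          simp [hpre]
      rw [hfun]
      exact Measurable.indicator (Finset.measurable_prod _ fun i _ => hν_apply (hA _)) (hY hD)
    · intro C hC ih
      have hfun : (fun ω => νInf ω (Prod.mk (Y ω) ⁻¹' Cᶜ)) =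
          fun ω => 1 - νInf ω (Prod.mk (Y ω) ⁻¹' C) := by
        funext ω
        rw [Set.preimage_compl, measure_compl (measurable_prodMk_left hC) (measure_ne_top _ _),
          (hνInfP ω).measure_univ]
      rw [hfun]
      exact ih.const_sub 1
    · intro g hdisj hmg ih
      have hfun : (fun ω => νInf ω (Prod.mk (Y ω) ⁻¹' ⋃ i, g i)) =
          fun ω => ∑' i, νInf ω (Prod.mk (Y ω) ⁻¹' g i) := by
        funext ω
        rw [Set.preimage_iUnion,
          measure_iUnion (fun i j hij => (hdisj hij).preimage _)
            (fun i => measurable_prodMk_left (hmg i))]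
      rw [hfun]
      exact Measurable.ennreal_tsum ih
  -- indicator rewriting
  have hind : ∀ A : Set (ℕ → S),
      ((A.indicator fun _ => (1:ℝ)) ∘ ξv) = (ξv ⁻¹' A).indicator (fun _ => (1:ℝ)) := by
    intro A; funext ω
    by_cases hω : ξv ω ∈ A <;> simp [Function.comp, hω, Set.indicator]
  -- basic building block coming from `hcond`
  have hbase : ∀ (s : Set Ω), MeasurableSet[G] s → ∀ C' ∈ 𝒞,
      ∫⁻ ω in s, νInf ω C' ∂P = P (s ∩ ξv ⁻¹' C') := by
    intro s hs C' hC'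
    have hC'm : MeasurableSet C' := hCmeas _ hC'
    have hGm : Measurable[G] fun ω => νInf ω C' := by
      obtain ⟨A, n, hA, hAu, rfl⟩ := hC'
      have heq : (fun ω => νInf ω {x | ∀ i, x i ∈ A i}) =
          fun ω => ∏ i : Fin n, ν ω (A (i : ℕ)) := funext fun ω => hνInfC ω A n hA hAu
      rw [heq]
      exact Finset.measurable_prod _ fun i _ => hν_apply (hA _)
    have hm0 : Measurable fun ω => νInf ω C' := hGm.mono hle le_rfl
    have hFint : Integrable ((C'.indicator fun _ => (1:ℝ)) ∘ ξv) P := by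
      rw [hind]
      exact (integrable_const (1:ℝ)).indicator (hξvm hC'm)
    have h1 : ∫ ω in s, (νInf ω C').toReal ∂P =
        ∫ ω in s, ((C'.indicator fun _ => (1:ℝ)) ∘ ξv) ω ∂P := by
      rw [← setIntegral_condExp hle hFint hs]
      exact integral_congr_ae (ae_restrict_of_ae (hcond C' hC'm).symm)
    have h2 : ∫ ω in s, ((C'.indicator fun _ => (1:ℝ)) ∘ ξv) ω ∂P =
        (P (s ∩ ξv ⁻¹' C')).toReal := by
      rw [hind]
      rw [setIntegral_indicator (hξvm hC'm), setIntegral_const]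
      simp [Measure.real]
    have h3 : ∫ ω in s, (νInf ω C').toReal ∂P = (∫⁻ ω in s, νInf ω C' ∂P).toReal :=
      integral_toReal hm0.aemeasurable (ae_of_all _ fun ω => measure_lt_top _ _)
    have hfin : ∫⁻ ω in s, νInf ω C' ∂P ≠ ⊤ := by
      refine ne_of_lt (lt_of_le_of_lt (lintegral_mono fun ω => prob_le_one) ?_)
      rw [lintegral_one, Measure.restrict_apply_univ]
      exact measure_lt_top _ _
    exact (ENNReal.toReal_eq_toReal_iff' hfin (measure_ne_top _ _)).1 (h3.symm.trans (h1.trans h2))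
  -- the key identity, by a π-λ argument
  have key : ∀ (sA : Set Ω), MeasurableSet[G] sA → ∀ ⦃C : Set (T × (ℕ → S))⦄, MeasurableSet C →
      ∫⁻ ω in sA, νInf ω (Prod.mk (Y ω) ⁻¹' C) ∂P =
        P (sA ∩ (fun ω => (Y ω, ξv ω)) ⁻¹' C) := by
    intro sA hsA
    have hjm : Measurable fun ω => (Y ω, ξv ω) := (hY.mono hle le_rfl).prodMk hξvm
    refine MeasurableSpace.induction_on_inter hgenProd hℛpi ?_ ?_ ?_ ?_
    · simp
    · rintro _ ⟨D, hD, C', hC'mem, rfl⟩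
      have hD0 : MeasurableSet (Y ⁻¹' D) := hle _ (hY hD)
      have hfun : (fun ω => νInf ω (Prod.mk (Y ω) ⁻¹' (D ×ˢ C'))) =
          (Y ⁻¹' D).indicator (fun ω => νInf ω C') := by
        funext ω
        by_cases hω : Y ω ∈ D
        · rw [Set.indicator_of_mem (show ω ∈ Y ⁻¹' D from hω)]
          congr 1
          ext x; simp [hω]
        · rw [Set.indicator_of_notMem (show ω ∉ Y ⁻¹' D from hω)]
          have : Prod.mk (Y ω) ⁻¹' (D ×ˢ C') = ∅ := by ext x; simp [hω]
          simp [this]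
      rw [hfun, lintegral_indicator hD0, Measure.restrict_restrict hD0,
        hbase _ ((hY hD).inter hsA) C' hC'mem]
      congr 1
      ext ω
      simp only [Set.mem_inter_iff, Set.mem_preimage, Set.mem_prod]
      tauto
    · intro C hC ih
      have hmG : Measurable fun ω => νInf ω (Prod.mk (Y ω) ⁻¹' C) :=
        (hmeas_sect hC).mono hle le_rfl
      have hfun : (fun ω => νInf ω (Prod.mk (Y ω) ⁻¹' Cᶜ)) =
          fun ω => 1 - νInf ω (Prod.mk (Y ω) ⁻¹' C) := by
        funext ω
        rw [Set.preimage_compl, measure_compl (measurable_prodMk_left hC) (measure_ne_top _ _),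
          (hνInfP ω).measure_univ]
      have hfin : ∫⁻ ω in sA, νInf ω (Prod.mk (Y ω) ⁻¹' C) ∂P ≠ ⊤ := by
        refine ne_of_lt (lt_of_le_of_lt (lintegral_mono fun ω => prob_le_one) ?_)
        rw [lintegral_one, Measure.restrict_apply_univ]
        exact measure_lt_top _ _
      rw [hfun, lintegral_sub hmG hfin (ae_of_all _ fun ω => prob_le_one),
        lintegral_one, Measure.restrict_apply_univ, ih]
      have hpre : MeasurableSet ((fun ω => (Y ω, ξv ω)) ⁻¹' C) := hjm hC
      have hset : sA ∩ ((fun ω => (Y ω, ξv ω)) ⁻¹' Cᶜ) =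
          sA \ (sA ∩ (fun ω => (Y ω, ξv ω)) ⁻¹' C) := by
        ext ω
        simp only [Set.mem_inter_iff, Set.mem_preimage, Set.mem_compl_iff, Set.mem_diff]
        tauto
      rw [hset]
      exact (measure_diff Set.inter_subset_left
        (((hle _ hsA).inter hpre).nullMeasurableSet) (measure_ne_top P _)).symm
    · intro g hdisj hmg ih
      have hfun : (fun ω => νInf ω (Prod.mk (Y ω) ⁻¹' ⋃ i, g i)) =
          fun ω => ∑' i, νInf ω (Prod.mk (Y ω) ⁻¹' g i) := by
        funext ω
        rw [Set.preimage_iUnion,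
          measure_iUnion (fun i j hij => (hdisj hij).preimage _)
            (fun i => measurable_prodMk_left (hmg i))]
      rw [hfun, lintegral_tsum fun i => ((hmeas_sect (hmg i)).mono hle le_rfl).aemeasurable]
      rw [tsum_congr fun i => ih i]
      rw [← measure_iUnion
        (fun i j hij => ((hdisj hij).preimage _).mono Set.inter_subset_right Set.inter_subset_right)
        (fun i => (hle _ hsA).inter (hjm (hmg i)))]
      rw [Set.preimage_iUnion, Set.inter_iUnion]
  -- final assembly
  intro n B hB
  set C : Set (T × (ℕ → S)) := {p | ∀ i : Fin n, f (p.1, p.2 (i : ℕ)) ∈ B i} with hC_def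
  have hCm : MeasurableSet C := by
    have : C = ⋂ i : Fin n, (fun p : T × (ℕ → S) => f (p.1, p.2 (i : ℕ))) ⁻¹' B i := by
      ext p; simp [hC_def]
    rw [this]
    exact MeasurableSet.iInter fun i =>
      (hf.comp (measurable_fst.prodMk ((measurable_pi_apply _).comp measurable_snd))) (hB i)
  have hsect : ∀ ω, νInf ω (Prod.mk (Y ω) ⁻¹' C) =
      ∏ i : Fin n, ν ω {x | f (Y ω, x) ∈ B i} := by
    intro ω
    have hp : Prod.mk (Y ω) ⁻¹' C =
        {x : ℕ → S | ∀ i : Fin n, x (i : ℕ) ∈ {y | f (Y ω, y) ∈ B i}} := rfl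
    rw [hp]
    exact (hνInf ω).2 n (fun i => {y | f (Y ω, y) ∈ B i})
      (fun i => (hf.comp measurable_prodMk_left) (hB i))
  have hg_eq : (fun ω => ∏ i : Fin n, ((ν ω) {x | f (Y ω, x) ∈ B i}).toReal) =
      fun ω => (νInf ω (Prod.mk (Y ω) ⁻¹' C)).toReal := by
    funext ω
    rw [hsect ω, ENNReal.toReal_prod]
  have hgm : Measurable[G] fun ω => (νInf ω (Prod.mk (Y ω) ⁻¹' C)).toReal :=
    ENNReal.measurable_toReal.comp (hmeas_sect hCm)
  have hgm' : AEStronglyMeasurable[G]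
      (fun ω => (νInf ω (Prod.mk (Y ω) ⁻¹' C)).toReal) P :=
    StronglyMeasurable.aestronglyMeasurable (hgm.stronglyMeasurable)
  have hjm : Measurable fun ω => (Y ω, ξv ω) := (hY.mono hle le_rfl).prodMk hξvm
  have hDset : {ω | ∀ i : Fin n, f (Y ω, ξ (i : ℕ) ω) ∈ B i} =
      (fun ω => (Y ω, ξv ω)) ⁻¹' C := rfl
  have hFint : Integrable
      (Set.indicator {ω | ∀ i : Fin n, f (Y ω, ξ (i : ℕ) ω) ∈ B i} (fun _ => (1:ℝ))) P := by
    rw [hDset]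
    exact (integrable_const (1:ℝ)).indicator (hjm hCm)
  have hbound : ∀ ω, ‖(νInf ω (Prod.mk (Y ω) ⁻¹' C)).toReal‖ ≤ 1 := by
    intro ω
    rw [Real.norm_of_nonneg ENNReal.toReal_nonneg]
    have h1 : νInf ω (Prod.mk (Y ω) ⁻¹' C) ≤ 1 := prob_le_one
    simpa using ENNReal.toReal_mono ENNReal.one_ne_top h1
  have hg_int : Integrable (fun ω => (νInf ω (Prod.mk (Y ω) ⁻¹' C)).toReal) P :=
    (integrable_const (1:ℝ)).mono'
      ((hgm.stronglyMeasurable.mono hle).aestronglyMeasurable) (ae_of_all _ hbound)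
  have hset_eq : ∀ s : Set Ω, MeasurableSet[G] s → P s < ⊤ →
      ∫ ω in s, (νInf ω (Prod.mk (Y ω) ⁻¹' C)).toReal ∂P =
        ∫ ω in s, Set.indicator {ω | ∀ i : Fin n, f (Y ω, ξ (i : ℕ) ω) ∈ B i}
          (fun _ => (1:ℝ)) ω ∂P := by
    intro s hs _
    have hL : ∫ ω in s, (νInf ω (Prod.mk (Y ω) ⁻¹' C)).toReal ∂P =
        (∫⁻ ω in s, νInf ω (Prod.mk (Y ω) ⁻¹' C) ∂P).toReal :=
      integral_toReal ((hmeas_sect hCm).mono hle le_rfl).aemeasurable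
        (ae_of_all _ fun ω => measure_lt_top _ _)
    rw [hL, key s hs hCm, hDset, setIntegral_indicator (hjm hCm), setIntegral_const]
    simp [Measure.real]
  have hmain := ae_eq_condExp_of_forall_setIntegral_eq hle hFint
    (fun s _ _ => hg_int.integrableOn) hset_eq hgm'
  rw [hg_eq]
  exact hmain.symm

/-- If `ξ` is conditionally i.i.d. given `𝒢` with directing random measure `ν`, `Y ∈ 𝒢`,
and `f : T × S → ℝ` is measurable, then `ξ'_i = f(Y, ξ_i)` is conditionally i.i.d. given `𝒢`:
`P(⋂_{i=1}^n {ξ'_i ∈ B_i} | 𝒢) = ∏_{i=1}^n ∫ 1_{B_i}(f(Y,x)) ν(dx)` a.s. -/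
theorem stmt11 {Ω S T : Type*} [MeasurableSpace Ω]
    [MetricSpace S] [CompleteSpace S] [SeparableSpace S] [MeasurableSpace S] [BorelSpace S]
    [MeasurableSpace T]
    (P : Measure Ω) [IsProbabilityMeasure P]
    (ξ : ℕ → Ω → S) (hξ : ∀ i, Measurable (ξ i))
    (G : MeasurableSpace Ω) (hG : G ≤ ‹MeasurableSpace Ω›)
    (ν : Ω → Measure S) (hνm : Measurable[G] ν) (hνp : ∀ ω, IsProbabilityMeasure (ν ω))
    (νInf : Ω → Measure (ℕ → S)) (hνInf : ∀ ω, IsIIDProduct (ν ω) (νInf ω))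
    (hcond : ∀ A : Set (ℕ → S), MeasurableSet A →
      P[(A.indicator fun _ => (1:ℝ)) ∘ (fun ω (i : ℕ) => ξ i ω) | G]
        =ᵐ[P] fun ω => (νInf ω A).toReal)
    (Y : Ω → T) (hY : Measurable[G] Y)
    (f : T × S → ℝ) (hf : Measurable f) :
    ∀ (n : ℕ) (B : Fin n → Set ℝ), (∀ i, MeasurableSet (B i)) →
      P[Set.indicator {ω | ∀ i : Fin n, f (Y ω, ξ (i : ℕ) ω) ∈ B i} (fun _ => (1:ℝ)) | G]
        =ᵐ[P] fun ω => ∏ i : Fin n, ((ν ω) {x | f (Y ω, x) ∈ B i}).toReal := by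
  rename_i mΩ mS cS sS msS bS mT pP
  have hνInfP : ∀ ω, IsProbabilityMeasure (νInf ω) := fun ω => (hνInf ω).1
  by_cases hle : G ≤ mΩ
  · exact stmt11_aux (mΩ := mΩ) G hle P ξ hξ ν hνm hνp νInf hνInf hcond Y hY f hf
  · exfalso
    have h0 := hcond Set.univ MeasurableSet.univ
    rw [condExp_of_not_le hle] at h0
    have h1 : ∀ᵐ ω ∂P, (0 : ℝ) = 1 := by
      filter_upwards [h0] with ω hω
      simpa [(hνInfP ω).measure_univ] using hω
    have h2 : P {ω | ¬ ((0:ℝ) = 1)} = 0 := by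
      simpa [ae_iff] using h1
    simp at h2
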